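/- Let A be a set with at least 6 elements and let T(A) be the partially ordered set with underlying set {0, 1} ∪ {g_a : a ∈ A} ∪ {g^e : e a 2-element subset of A} (all these elements pairwise distinct), ordered so that 0 is the least element, 1 is the greatest element, the elements g_a are the atoms, the elements g^e are the coatoms, distinct atoms are incomparable, distinct coatoms are incomparable, and g_a < g^e if and only if a ∈ e. Then T(A) is a lattice and it is simple. -/

import Mathlib

/-- A congruence of a lattice: an equivalence relation compatible with `⊔` and `⊓`. -/
structure LatCon (L : Type*) [Lattice L] where
  rel : L → L → Prop
  refl : ∀ x, rel x x
  symm : ∀ {x y}, rel x y → rel y x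
  trans : ∀ {x y z}, rel x y → rel y z → rel x z
  sup : ∀ {x₁ y₁ x₂ y₂}, rel x₁ y₁ → rel x₂ y₂ → rel (x₁ ⊔ x₂) (y₁ ⊔ y₂)
  inf : ∀ {x₁ y₁ x₂ y₂}, rel x₁ y₁ → rel x₂ y₂ → rel (x₁ ⊓ x₂) (y₁ ⊓ y₂)

/-- A lattice is simple if it has at least two elements and its only congruences
are the equality congruence `Δ` and the full congruence `∇`. -/
def IsSimpleLat (L : Type*) [Lattice L] : Prop :=
  Nontrivial L ∧ ∀ θ : LatCon L, (∀ x y, θ.rel x y ↔ x = y) ∨ (∀ x y, θ.rel x y)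

set_option maxHeartbeats 1600000 in
/-- **Lemma.** Let `A` be a set with at least `6` elements and let `T = T(A)` be the
poset with underlying set `{0, 1} ∪ {g_a : a ∈ A} ∪ {g^e : e a 2-element subset of A}`
(all elements pairwise distinct), ordered so that `0` is least, `1` is greatest, the
`g_a` are the atoms, the `g^e` are the coatoms, distinct atoms are incomparable,
distinct coatoms are incomparable, and `g_a < g^e` iff `a ∈ e`.  Then `T(A)` is a
lattice (its partial order extends to a lattice structure) and it is simple. -/
theorem fruchtPoset_lattice_and_simple {A : Type*} {T : Type*} [po : PartialOrder T]
    (hA : ∃ f : Fin 6 → A, Function.Injective f)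
    (zero one : T) (g : A → T) (gc : {e : Finset A // e.card = 2} → T)
    -- all the listed elements are pairwise distinct:
    (hg : Function.Injective g) (hgc : Function.Injective gc)
    (hggc : ∀ a e, g a ≠ gc e)
    (hg0 : ∀ a, g a ≠ zero) (hg1 : ∀ a, g a ≠ one)
    (hgc0 : ∀ e, gc e ≠ zero) (hgc1 : ∀ e, gc e ≠ one)
    (h01 : zero ≠ one)
    -- the underlying set of `T` is exactly `{0, 1} ∪ {g_a} ∪ {g^e}`:
    (hcover : ∀ t : T, t = zero ∨ t = one ∨ (∃ a, t = g a) ∨ ∃ e, t = gc e)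
    -- the order of `T` is as described:
    (hle : ∀ x y : T, x ≤ y ↔
      (x = zero ∨ y = one ∨ x = y ∨ ∃ a e, x = g a ∧ y = gc e ∧ a ∈ e.1)) :
    ∃ inst : Lattice T, inst.toPartialOrder = po ∧ @IsSimpleLat T inst := by
  classical
  obtain ⟨f, hf⟩ := hA
  -- basic order facts
  have hzle : ∀ x : T, zero ≤ x := fun x => (hle _ _).2 (Or.inl rfl)
  have hle1 : ∀ x : T, x ≤ one := fun x => (hle _ _).2 (Or.inr (Or.inl rfl))
  have hzge : ∀ x : T, x ≤ zero → x = zero := by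
    intro x hx
    rcases (hle _ _).1 hx with h | h | h | ⟨a, e, _, h2, _⟩
    · exact h
    · exact absurd h h01
    · exact h
    · exact absurd h2.symm (hgc0 e)
  have hone_le : ∀ x : T, one ≤ x → x = one := by
    intro x hx
    rcases (hle _ _).1 hx with h | h | h | ⟨a, e, h1, _, _⟩
    · exact absurd h.symm h01
    · exact h
    · exact h.symm
    · exact absurd h1.symm (hg1 a)
  have atom_le_iff : ∀ (a : A) (e : {e : Finset A // e.card = 2}),
      g a ≤ gc e ↔ a ∈ e.1 := by
    intro a e
    constructor
    · intro hx
      rcases (hle _ _).1 hx with h | h | h | ⟨a', e', h1, h2, h3⟩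
      · exact absurd h (hg0 a)
      · exact absurd h (hgc1 e)
      · exact absurd h (hggc a e)
      · rw [hg h1, hgc h2]; exact h3
    · intro hm
      exact (hle _ _).2 (Or.inr (Or.inr (Or.inr ⟨a, e, rfl, rfl, hm⟩)))
  have le_atom : ∀ (x : T) (a : A), x ≤ g a → x = zero ∨ x = g a := by
    intro x a hx
    rcases (hle _ _).1 hx with h | h | h | ⟨a', e', _, h2, _⟩
    · exact Or.inl h
    · exact absurd h (hg1 a)
    · exact Or.inr h
    · exact absurd h2 (hggc a e')
  have coatom_le : ∀ (e : {e : Finset A // e.card = 2}) (x : T),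
      gc e ≤ x → x = gc e ∨ x = one := by
    intro e x hx
    rcases (hle _ _).1 hx with h | h | h | ⟨a', e', h1, _, _⟩
    · exact absurd h (hgc0 e)
    · exact Or.inr h
    · exact Or.inl h.symm
    · exact absurd h1.symm (hggc a' e)
  have atom_le_atom : ∀ a b : A, g a ≤ g b → a = b := by
    intro a b hab
    rcases le_atom _ b hab with h | h
    · exact absurd h (hg0 a)
    · exact hg h
  have coatom_le_coatom : ∀ e f' : {e : Finset A // e.card = 2},
      gc e ≤ gc f' → e = f' := by
    intro e f' hef
    rcases coatom_le e _ hef with h | h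
    · exact (hgc h).symm
    · exact absurd h (hgc1 f')
  -- data about 2-element sets
  have epair : ∀ (e : {e : Finset A // e.card = 2}) (a b : A), a ≠ b →
      a ∈ e.1 → b ∈ e.1 → e.1 = {a, b} := by
    intro e a b hab ha hb
    refine (Finset.eq_of_subset_of_card_le ?_ ?_).symm
    · intro x hx
      simp only [Finset.mem_insert, Finset.mem_singleton] at hx
      rcases hx with rfl | rfl
      · exact ha
      · exact hb
    · rw [e.2, Finset.card_pair hab]
  have e_unique : ∀ (e f' : {e : Finset A // e.card = 2}) (a b : A), a ≠ b →
      a ∈ e.1 → b ∈ e.1 → a ∈ f'.1 → b ∈ f'.1 → e = f' := by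
    intro e f' a b hab hae hbe haf hbf
    exact Subtype.ext (by rw [epair e a b hab hae hbe, epair f' a b hab haf hbf])
  -- the lattice instance
  letI inst : Lattice T :=
    { po with
      sup := fun x y =>
        if x ≤ y then y else if y ≤ x then x else
        if h : ∃ e : {e : Finset A // e.card = 2}, ∃ a b : A,
            x = g a ∧ y = g b ∧ a ∈ e.1 ∧ b ∈ e.1 then gc h.choose
        else one
      le_sup_left := by
        intro x y
        split_ifs with h1 h2 h3
        · exact h1
        · exact le_refl x
        · obtain ⟨a, b, hxa, hyb, hae, hbe⟩ := h3.choose_spec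
          exact le_of_eq hxa |>.trans ((atom_le_iff a _).2 hae)
        · exact hle1 x
      le_sup_right := by
        intro x y
        split_ifs with h1 h2 h3
        · exact le_refl y
        · exact h2
        · obtain ⟨a, b, hxa, hyb, hae, hbe⟩ := h3.choose_spec
          exact le_of_eq hyb |>.trans ((atom_le_iff b _).2 hbe)
        · exact hle1 y
      sup_le := by
        intro x y z hxz hyz
        split_ifs with h1 h2 h3
        · exact hyz
        · exact hxz
        · obtain ⟨a, b, hxa, hyb, hae, hbe⟩ := h3.choose_spec
          have hab : a ≠ b := by
            intro h; apply h1; rw [hxa, hyb, h]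
          rcases hcover z with rfl | rfl | ⟨c, rfl⟩ | ⟨fz, rfl⟩
          · rw [hxa] at hxz
            exact absurd (hzge _ hxz) (hg0 a)
          · exact hle1 _
          · rw [hxa] at hxz; rw [hyb] at hyz
            exact absurd ((atom_le_atom a c hxz).trans (atom_le_atom b c hyz).symm) hab
          · rw [hxa] at hxz; rw [hyb] at hyz
            have haf := (atom_le_iff a fz).1 hxz
            have hbf := (atom_le_iff b fz).1 hyz
            rw [e_unique _ fz a b hab hae hbe haf hbf]
        · -- x, y incomparable, not two atoms: z must be one
          have hz1 : z = one := by
            rcases hcover x with rfl | rfl | ⟨a, rfl⟩ | ⟨e, rfl⟩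
            · exact absurd (hzle y) h1
            · exact absurd (hle1 y) h2
            · rcases hcover y with rfl | rfl | ⟨b, rfl⟩ | ⟨e, rfl⟩
              · exact absurd (hzle _) h2
              · exact absurd (hle1 _) h1
              · have hab : a ≠ b := fun h => h1 (by rw [h])
                exact absurd ⟨⟨{a, b}, Finset.card_pair hab⟩, a, b, rfl, rfl,
                  by simp, by simp⟩ h3
              · rcases coatom_le e z hyz with rfl | h
                · exact absurd hxz h1
                · exact h
            · rcases coatom_le e z hxz with rfl | h
              · exact absurd hyz h2
              · exact h
          rw [hz1]
      inf := fun x y =>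
        if x ≤ y then x else if y ≤ x then y else
        if h : ∃ a : A, ∃ e f' : {e : Finset A // e.card = 2},
            x = gc e ∧ y = gc f' ∧ a ∈ e.1 ∧ a ∈ f'.1 then g h.choose
        else zero
      inf_le_left := by
        intro x y
        split_ifs with h1 h2 h3
        · exact le_refl x
        · exact h2
        · obtain ⟨e, f', hxe, hyf, hae, haf⟩ := h3.choose_spec
          exact ((atom_le_iff _ e).2 hae).trans (le_of_eq hxe.symm)
        · exact hzle x
      inf_le_right := by
        intro x y
        split_ifs with h1 h2 h3
        · exact h1
        · exact le_refl y
        · obtain ⟨e, f', hxe, hyf, hae, haf⟩ := h3.choose_spec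
          exact ((atom_le_iff _ f').2 haf).trans (le_of_eq hyf.symm)
        · exact hzle y
      le_inf := by
        intro z x y hzx hzy
        split_ifs with h1 h2 h3
        · exact hzx
        · exact hzy
        · obtain ⟨e, f', hxe, hyf, hae, haf⟩ := h3.choose_spec
          have hef : e ≠ f' := by
            intro h; apply h1; rw [hxe, hyf, h]
          rcases hcover z with rfl | rfl | ⟨b, rfl⟩ | ⟨e', rfl⟩
          · exact hzle _
          · rw [hxe] at hzx
            exact absurd (hone_le _ hzx) (hgc1 e)
          · rw [hxe] at hzx; rw [hyf] at hzy
            have hbe := (atom_le_iff b e).1 hzx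
            have hbf := (atom_le_iff b f').1 hzy
            by_cases hba : b = h3.choose
            · rw [hba]
            · exact absurd (e_unique e f' b h3.choose hba hbe hae hbf haf) hef
          · rw [hxe] at hzx; rw [hyf] at hzy
            exact absurd ((coatom_le_coatom e' e hzx).symm.trans
              (coatom_le_coatom e' f' hzy)) hef
        · -- z must be zero
          have hz0 : z = zero := by
            rcases hcover z with rfl | rfl | ⟨b, rfl⟩ | ⟨e, rfl⟩
            · rfl
            · exact absurd ((hone_le x hzx).symm ▸ hle1 y) h2
            · rcases hcover x with rfl | rfl | ⟨c, rfl⟩ | ⟨e, rfl⟩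
              · exact absurd (hzle y) h1
              · exact absurd (hle1 y) h2
              · rw [← atom_le_atom b c hzx] at h1
                exact absurd hzy h1
              · rcases hcover y with rfl | rfl | ⟨c, rfl⟩ | ⟨fy, rfl⟩
                · exact absurd (hzle _) h2
                · exact absurd (hle1 _) h1
                · rw [← atom_le_atom b c hzy] at h2
                  exact absurd hzx h2
                · exact absurd ⟨b, e, fy, rfl, rfl,
                    (atom_le_iff b e).1 hzx, (atom_le_iff b fy).1 hzy⟩ h3
            · rcases coatom_le e x hzx with rfl | rfl
              · exact absurd hzy h1
              · exact absurd (hle1 y) h2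
          rw [hz0] }
  -- sup/inf computations from the order
  have sup_aa : ∀ (a b : A) (e : {e : Finset A // e.card = 2}), a ≠ b →
      a ∈ e.1 → b ∈ e.1 → g a ⊔ g b = gc e := by
    intro a b e hab ha hb
    have hub : g a ⊔ g b ≤ gc e := sup_le ((atom_le_iff a e).2 ha) ((atom_le_iff b e).2 hb)
    rcases hcover (g a ⊔ g b) with h | h | ⟨c, h⟩ | ⟨f', h⟩
    · exact absurd (hzge _ (h ▸ le_sup_left)) (hg0 a)
    · rw [h] at hub
      exact absurd (hone_le _ hub) (hgc1 e)
    · exact absurd ((atom_le_atom a c (h ▸ le_sup_left)).trans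
        (atom_le_atom b c (h ▸ le_sup_right)).symm) hab
    · have haf := (atom_le_iff a f').1 (h ▸ le_sup_left)
      have hbf := (atom_le_iff b f').1 (h ▸ le_sup_right)
      rw [h, e_unique f' e a b hab haf hbf ha hb]
  have sup_ac : ∀ (a : A) (e : {e : Finset A // e.card = 2}), a ∉ e.1 →
      g a ⊔ gc e = one := by
    intro a e hae
    rcases coatom_le e _ le_sup_right with h | h
    · exact absurd ((atom_le_iff a e).1 (h ▸ le_sup_left)) hae
    · exact h
  have sup_cc : ∀ e f' : {e : Finset A // e.card = 2}, e ≠ f' →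
      gc e ⊔ gc f' = one := by
    intro e f' hef
    rcases coatom_le e _ le_sup_left with h | h
    · exact absurd (coatom_le_coatom f' e (h ▸ le_sup_right)) (Ne.symm hef)
    · exact h
  have inf_aa : ∀ a b : A, a ≠ b → g a ⊓ g b = zero := by
    intro a b hab
    rcases le_atom _ a inf_le_left with h | h
    · exact h
    · exact absurd (atom_le_atom a b (inf_eq_left.mp h)) hab
  have inf_ac_mem : ∀ (a : A) (e : {e : Finset A // e.card = 2}), a ∈ e.1 →
      g a ⊓ gc e = g a := fun a e ha => inf_eq_left.mpr ((atom_le_iff a e).2 ha)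
  have inf_ac_not : ∀ (a : A) (e : {e : Finset A // e.card = 2}), a ∉ e.1 →
      g a ⊓ gc e = zero := by
    intro a e hae
    rcases le_atom _ a inf_le_left with h | h
    · exact h
    · exact absurd ((atom_le_iff a e).1 (inf_eq_left.mp h)) hae
  -- picking fresh elements of A
  have pick : ∀ s : Finset A, s.card ≤ 5 → ∃ a, a ∉ s := by
    intro s hs
    by_contra hcon
    push_neg at hcon
    have h6 : (Finset.univ.image f).card ≤ s.card := by
      apply Finset.card_le_card
      intro x hx
      simp only [Finset.mem_image, Finset.mem_univ, true_and] at hx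
      obtain ⟨i, rfl⟩ := hx
      exact hcon _
    rw [Finset.card_image_of_injective _ hf, Finset.card_univ, Fintype.card_fin] at h6
    omega
  refine ⟨inst, rfl, ⟨zero, one, h01⟩, ?_⟩
  intro θ
  rw [or_iff_not_imp_left]
  intro hΔ
  push_neg at hΔ
  obtain ⟨x, y, hxy⟩ := hΔ
  obtain ⟨hr, hne0⟩ : θ.rel x y ∧ x ≠ y := by
    rcases hxy with h | ⟨hnr, rfl⟩
    · exact h
    · exact absurd (θ.refl x) hnr
  -- reduce to a related comparable pair
  obtain ⟨u, v, huv, hneuv, hleuv⟩ : ∃ u v : T, θ.rel u v ∧ u ≠ v ∧ u ≤ v := by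
    refine ⟨x ⊓ y, x ⊔ y, ?_, ?_, inf_le_left.trans le_sup_left⟩
    · have ha : θ.rel (x ⊓ y) y := by
        have := θ.inf hr (θ.refl y); rwa [inf_idem] at this
      have hb : θ.rel y (x ⊔ y) := by
        have := θ.sup hr (θ.refl y); rw [sup_idem] at this; exact θ.symm this
      exact θ.trans ha hb
    · intro h
      have hxy2 : x ⊔ y ≤ x ⊓ y := le_of_eq h.symm
      exact hne0 (le_antisymm (le_sup_left.trans (hxy2.trans inf_le_right))
        (le_sup_right.trans (hxy2.trans inf_le_left)))
  -- spreading lemmas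
  have H0a : ∀ a : A, θ.rel zero (g a) → θ.rel zero one := by
    intro a h0a
    have HA : ∀ e : {e : Finset A // e.card = 2}, a ∉ e.1 → θ.rel (gc e) one := by
      intro e hae
      have h := θ.sup h0a (θ.refl (gc e))
      rwa [sup_eq_right.mpr (hzle _), sup_ac a e hae] at h
    have HB : ∀ b : A, θ.rel zero (g b) := by
      intro b
      obtain ⟨c, hc⟩ := pick {a, b} (by
        have := Finset.card_insert_le a ({b} : Finset A)
        simp only [Finset.card_singleton] at this
        omega)
      obtain ⟨d, hd⟩ := pick {a, b, c} (by
        have h1 := Finset.card_insert_le a ({b, c} : Finset A)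
        have h2 := Finset.card_insert_le b ({c} : Finset A)
        simp only [Finset.card_singleton] at h2
        omega)
      have hcd : c ≠ d := by
        intro h
        exact hd (by simp [← h])
      set e : {e : Finset A // e.card = 2} := ⟨{c, d}, Finset.card_pair hcd⟩ with he
      have hae : a ∉ e.1 := by
        simp only [he, Finset.mem_insert, Finset.mem_singleton]
        push_neg
        constructor
        · intro h; exact hc (by simp [← h])
        · intro h; exact hd (by simp [← h])
      have hbe : b ∉ e.1 := by
        simp only [he, Finset.mem_insert, Finset.mem_singleton]
        push_neg
        constructor
        · intro h; exact hc (by simp [← h])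
        · intro h; exact hd (by simp [← h])
      have h := θ.inf (θ.refl (g b)) (HA e hae)
      rwa [inf_ac_not b e hbe, inf_eq_left.mpr (hle1 _)] at h
    have HC : ∀ e : {e : Finset A // e.card = 2}, θ.rel zero (gc e) := by
      intro e
      obtain ⟨p, q, hpq, hpe⟩ := Finset.card_eq_two.mp e.2
      have hp : p ∈ e.1 := by rw [hpe]; simp
      have hq : q ∈ e.1 := by rw [hpe]; simp
      have h1 : θ.rel (g p) (g q) := θ.trans (θ.symm (HB p)) (HB q)
      have h2 := θ.sup (θ.refl (g p)) h1
      rw [sup_idem, sup_aa p q e hpq hp hq] at h2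
      exact θ.trans (HB p) h2
    have hne01 : f 0 ≠ f 1 := fun h => by simpa using hf h
    have hne23 : f 2 ≠ f 3 := fun h => by simpa using hf h
    set e1 : {e : Finset A // e.card = 2} := ⟨{f 0, f 1}, Finset.card_pair hne01⟩
    set e2 : {e : Finset A // e.card = 2} := ⟨{f 2, f 3}, Finset.card_pair hne23⟩
    have hne12 : e1 ≠ e2 := by
      intro h
      have h0 : f 0 ∈ e2.1 := by rw [← h]; simp [e1]
      simp only [e2, Finset.mem_insert, Finset.mem_singleton] at h0
      rcases h0 with h0 | h0 <;> simpa using hf h0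
    have h12 : θ.rel (gc e1) (gc e2) := θ.trans (θ.symm (HC e1)) (HC e2)
    have h2 := θ.sup (θ.refl (gc e1)) h12
    rw [sup_idem, sup_cc e1 e2 hne12] at h2
    exact θ.trans (HC e1) h2
  have H0c : ∀ e : {e : Finset A // e.card = 2}, θ.rel zero (gc e) → θ.rel zero one := by
    intro e h
    obtain ⟨p, q, hpq, hpe⟩ := Finset.card_eq_two.mp e.2
    have hp : p ∈ e.1 := by rw [hpe]; simp
    have h2 := θ.inf (θ.refl (g p)) h
    rw [inf_eq_right.mpr (hzle _), inf_ac_mem p e hp] at h2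
    exact H0a p h2
  have Hc1 : ∀ e : {e : Finset A // e.card = 2}, θ.rel (gc e) one → θ.rel zero one := by
    intro e h
    obtain ⟨b, hb⟩ := pick e.1 (by rw [e.2]; omega)
    have h2 := θ.inf (θ.refl (g b)) h
    rw [inf_ac_not b e hb, inf_eq_left.mpr (hle1 _)] at h2
    exact H0a b h2
  have Ha1 : ∀ a : A, θ.rel (g a) one → θ.rel zero one := by
    intro a h
    obtain ⟨c, hc⟩ := pick {a} (by simp)
    obtain ⟨d, hd⟩ := pick {a, c} (by
      have := Finset.card_insert_le a ({c} : Finset A)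
      simp only [Finset.card_singleton] at this
      omega)
    have hcd : c ≠ d := fun h' => hd (by simp [← h'])
    set e : {e : Finset A // e.card = 2} := ⟨{c, d}, Finset.card_pair hcd⟩ with he
    have hae : a ∉ e.1 := by
      simp only [he, Finset.mem_insert, Finset.mem_singleton]
      push_neg
      constructor
      · intro h'; exact hc (by simp [← h'])
      · intro h'; exact hd (by simp [← h'])
    have h2 := θ.inf (θ.refl (gc e)) h
    rw [inf_comm (gc e) (g a), inf_ac_not a e hae, inf_eq_left.mpr (hle1 _)] at h2
    exact H0c e h2
  have Hac : ∀ (a : A) (e : {e : Finset A // e.card = 2}), a ∈ e.1 →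
      θ.rel (g a) (gc e) → θ.rel zero one := by
    intro a e ha h
    obtain ⟨p, q, hpq, hpe⟩ := Finset.card_eq_two.mp e.2
    obtain ⟨b, hb, hba⟩ : ∃ b, b ∈ e.1 ∧ b ≠ a := by
      have ha' : a = p ∨ a = q := by
        have := ha; rw [hpe] at this
        simpa using this
      rcases ha' with rfl | rfl
      · exact ⟨q, by rw [hpe]; simp, Ne.symm hpq⟩
      · exact ⟨p, by rw [hpe]; simp, hpq⟩
    have h2 := θ.inf (θ.refl (g b)) h
    rw [inf_aa b a hba, inf_ac_mem b e hb] at h2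
    exact H0a b h2
  -- the main case analysis
  have h01rel : θ.rel zero one := by
    rcases hcover u with rfl | rfl | ⟨a, rfl⟩ | ⟨e, rfl⟩
    · rcases hcover v with rfl | rfl | ⟨a, rfl⟩ | ⟨e, rfl⟩
      · exact absurd rfl hneuv
      · exact huv
      · exact H0a a huv
      · exact H0c e huv
    · exact absurd (hone_le v hleuv).symm hneuv
    · rcases hcover v with rfl | rfl | ⟨b, rfl⟩ | ⟨e, rfl⟩
      · exact absurd (hzge _ hleuv) (hg0 a)
      · exact Ha1 a huv
      · exact absurd (congrArg g (atom_le_atom a b hleuv)) hneuv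
      · exact Hac a e ((atom_le_iff a e).1 hleuv) huv
    · rcases coatom_le e v hleuv with rfl | rfl
      · exact absurd rfl hneuv
      · exact Hc1 e huv
  -- conclude: everything is related
  have hall : ∀ t : T, θ.rel t one := by
    intro t
    have h := θ.sup (θ.refl t) h01rel
    rwa [sup_eq_left.mpr (hzle t), sup_eq_right.mpr (hle1 t)] at h
  intro s t
  exact θ.trans (hall s) (θ.symm (hall t))
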